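/- Let M be an integral homology 3-sphere and 𝒦 a very admissible set of knots in M. Then the idèle group decomposes as I_{(M;𝒦)} = U + P_{(M;𝒦)}, where U is the group of unit idèles and P_{(M;𝒦)} the principal idèle group. -/

import Mathlib

open scoped Pointwise

/-- The idèle group I_{(M;𝒦)} (as a set): restricted product of H₁(∂V_K) = ℤ[m] × ℤ[l]
with almost all longitude components v_K(a_K) = 0. -/
def Idele (K : Type) : Set (K → ℤ × ℤ) := {a | {k | (a k).2 ≠ 0}.Finite}

/-- The unit idèles U = ∏ ℤ[m] (all longitude components zero). -/
def UnitIdele (K : Type) : Set (K → ℤ × ℤ) := {a | ∀ k, (a k).2 = 0}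

/-- ι^α_{K*} : H₁(∂V_k) → H₁(X_L) in the linking-number model over an integral
homology 3-sphere: H₁(X_L) is free on the meridians of the knots in the finite set L,
the meridian of k maps to its own meridian class (0 if k ∉ L), and a longitude of k
maps to ∑_{j ∈ L} lk(k,j)·[m_j]. -/
def iotaL (K : Type) [DecidableEq K] (lk : K → K → ℤ) (L : Finset K) (k : K) :
    ℤ × ℤ → ({x // x ∈ L} → ℤ) :=
  fun a j => (if (j : K) = k then a.1 else 0) + a.2 * lk k (j : K)

/-- The principal idèles P_{(M;𝒦)}: idèles whose image ∑_K ι^α_{K*}(a_K) vanishes in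
H₁(X_{L_α}) for every finite subset L_α ⊂ 𝒦. -/
def PIdele (K : Type) [DecidableEq K] (lk : K → K → ℤ) : Set (K → ℤ × ℤ) :=
  {a | a ∈ Idele K ∧ ∀ L : Finset K, (∑ᶠ k : K, iotaL K lk L k (a k)) = 0}

/-- for an integral homology 3-sphere M (modeled by its linking pairing
lk on a very admissible countable set 𝒦 of knots, symmetric, with 0-framed longitudes
and each knot linking only finitely many others), the idèle group decomposes as
I_{(M;𝒦)} = U + P_{(M;𝒦)}. -/
theorem stmt_8 (K : Type) [DecidableEq K] [Countable K] (lk : K → K → ℤ)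
    (hsymm : ∀ i j, lk i j = lk j i) (hself : ∀ i, lk i i = 0)
    (hfin : ∀ i, {j | lk i j ≠ 0}.Finite) :
    Idele K = UnitIdele K + PIdele K lk := by
  classical
  apply Set.eq_of_subset_of_subset
  · intro a ha
    set S : Finset K := ha.toFinset with hS
    have hmemS : ∀ k, k ∈ S ↔ (a k).2 ≠ 0 := by
      intro k; rw [hS]; exact Set.Finite.mem_toFinset ha
    set p : K → ℤ × ℤ := fun k => (-∑ i ∈ S, (a i).2 * lk i k, (a k).2) with hpdef
    have hpIdele : p ∈ Idele K := by
      have : {k | (p k).2 ≠ 0} = {k | (a k).2 ≠ 0} := rfl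
      simpa [Idele, this] using ha
    refine Set.mem_add.2 ⟨fun k => ((a k).1 - (p k).1, 0), fun k => rfl,
      p, ⟨hpIdele, ?_⟩, by funext k; simp [hpdef, Prod.ext_iff]⟩
    intro L
    have hsupp : (Function.support fun k => iotaL K lk L k (p k)) ⊆ ↑(L ∪ S) := by
      intro k hk
      simp only [Finset.coe_union, Set.mem_union, Finset.mem_coe]
      by_contra hcon
      push_neg at hcon
      apply hk
      funext j
      have hj : (j : K) ≠ k := by
        intro h; exact hcon.1 (h ▸ j.2)
      have h2 : (a k).2 = 0 := by
        by_contra h; exact hcon.2 ((hmemS k).2 h)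
      simp [iotaL, hj, hpdef, h2]
    rw [finsum_eq_finset_sum_of_support_subset _ hsupp]
    funext j
    rw [Finset.sum_apply]
    have hjL : (j : K) ∈ L ∪ S := Finset.mem_union_left _ j.2
    have hsplit : ∀ k ∈ L ∪ S, iotaL K lk L k (p k) j =
        (if (j : K) = k then (p k).1 else 0) + (a k).2 * lk k (j : K) := by
      intro k _; rfl
    rw [Finset.sum_congr rfl hsplit, Finset.sum_add_distrib]
    have h1 : (∑ k ∈ L ∪ S, if (j : K) = k then (p k).1 else 0) = (p (j : K)).1 := by
      rw [Finset.sum_ite_eq (L ∪ S) (j : K) (fun k => (p k).1)]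
      simp [hjL]
    have h2 : (∑ k ∈ L ∪ S, (a k).2 * lk k (j : K)) =
        ∑ k ∈ S, (a k).2 * lk k (j : K) := by
      refine (Finset.sum_subset (Finset.subset_union_right) ?_).symm
      intro k _ hk
      have : (a k).2 = 0 := by
        by_contra h; exact hk ((hmemS k).2 h)
      simp [this]
    rw [h1, h2]
    simp [hpdef]
  · rintro x hx
    rw [Set.mem_add] at hx
    obtain ⟨u, hu, p, hp, rfl⟩ := hx
    have : {k | ((u + p) k).2 ≠ 0} ⊆ {k | (p k).2 ≠ 0} := by
      intro k hk
      simp only [Set.mem_setOf_eq, Pi.add_apply, Prod.snd_add] at hk ⊢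
      intro h; exact hk (by rw [hu k, h, add_zero])
    exact Set.Finite.subset hp.1 this
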